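/- arXiv:2407.04227 — 2 statements merged into one kernel-verified Lean document; each statement's English description precedes it below -/
import Mathlib

section
/- With the setup of Proposition 1 (box $B = \prod_i [l_i,u_i]$, function $f$, mapping $\Phi$ with $f_i(x)=0 \iff x_i = \Phi_i(x)$, and $\widehat{\Phi}$ defined via projections and boundary cases), suppose additionally that $\Phi$ and $f$ are continuous, that $\limsup_{x_i \to l_i^+,\, f_i(x) \le 0} \Phi_i(x) \le l_i$, and that $\liminf_{x_i \to u_i^-,\, f_i(x) \ge 0} \Phi_i(x) \ge u_i$. Then $\widehat{\Phi}$ is a continuous function on $B$. -/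
lemma clamp_lip (L U a b : ℝ) : |max L (min U a) - max L (min U b)| ≤ |a - b| := by
  have h1 : a - b ≤ |a - b| := le_abs_self _
  have h2 : -|a - b| ≤ a - b := neg_abs_le _
  rw [abs_le]
  simp only [max_def, min_def]
  split_ifs <;> constructor <;> linarith

/-- Proposition 2: continuity of the projected map `Φhat` on the box `B`. -/
theorem stmt1 (I : ℕ) (l u : Fin I → ℝ) (hlu : ∀ i, l i < u i)
    (f Φ : (Fin I → ℝ) → Fin I → ℝ)
    (B : Set (Fin I → ℝ)) (hB : B = {x | ∀ i, x i ∈ Set.Icc (l i) (u i)})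
    (hΦ : ∀ x ∈ B, ∀ i, f x i = 0 ↔ x i = Φ x i)
    (Φhat : (Fin I → ℝ) → Fin I → ℝ)
    (hΦhat : ∀ x ∈ B, ∀ i, Φhat x i =
      if f x i ≤ 0 ∧ x i = l i then l i
      else if 0 ≤ f x i ∧ x i = u i then u i
      else max (l i) (min (u i) (Φ x i)))
    (hfc : ContinuousOn f B) (hΦc : ContinuousOn Φ B)
    (hliml : ∀ i, ∀ x₀ ∈ B, x₀ i = l i → f x₀ i ≤ 0 →
      ∀ ε > 0, ∃ δ > 0, ∀ x ∈ B, f x i ≤ 0 → dist x x₀ < δ → Φ x i ≤ l i + ε)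
    (hlimu : ∀ i, ∀ x₀ ∈ B, x₀ i = u i → 0 ≤ f x₀ i →
      ∀ ε > 0, ∃ δ > 0, ∀ x ∈ B, 0 ≤ f x i → dist x x₀ < δ → u i - ε ≤ Φ x i) :
    ContinuousOn Φhat B := by
  rw [continuousOn_pi]
  intro i x₀ hx₀
  rw [Metric.continuousWithinAt_iff]
  intro ε hε
  have hx₀B : ∀ j, l j ≤ x₀ j ∧ x₀ j ≤ u j := by
    intro j
    have h := hx₀
    rw [hB] at h
    exact h j
  -- coordinate distance bound
  have hcoord : ∀ x : Fin I → ℝ, |x i - x₀ i| ≤ dist x x₀ := by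
    intro x; rw [← Real.dist_eq]; exact dist_le_pi_dist x x₀ i
  -- ε-δ continuity of f in coordinate i
  have hfεδ : ∀ e > (0:ℝ), ∃ δ > 0, ∀ x ∈ B, dist x x₀ < δ → |f x i - f x₀ i| < e := by
    intro e he
    obtain ⟨δ, hδ, h⟩ := Metric.continuousWithinAt_iff.mp (hfc x₀ hx₀) e he
    refine ⟨δ, hδ, fun x hx hd => lt_of_le_of_lt ?_ (h hx hd)⟩
    rw [← Real.dist_eq]; exact dist_le_pi_dist _ _ i
  have hΦεδ : ∀ e > (0:ℝ), ∃ δ > 0, ∀ x ∈ B, dist x x₀ < δ → |Φ x i - Φ x₀ i| < e := by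
    intro e he
    obtain ⟨δ, hδ, h⟩ := Metric.continuousWithinAt_iff.mp (hΦc x₀ hx₀) e he
    refine ⟨δ, hδ, fun x hx hd => lt_of_le_of_lt ?_ (h hx hd)⟩
    rw [← Real.dist_eq]; exact dist_le_pi_dist _ _ i
  have hlu' := hlu i
  -- Φhat is always in [l i, u i]
  have hΦhat_mem : ∀ x ∈ B, l i ≤ Φhat x i ∧ Φhat x i ≤ u i := by
    intro x hx
    rw [hΦhat x hx i]
    split_ifs with h1 h2
    · exact ⟨le_refl _, le_of_lt hlu'⟩
    · exact ⟨le_of_lt hlu', le_refl _⟩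
    · constructor
      · exact le_max_left _ _
      · exact max_le (le_of_lt hlu') (min_le_left _ _)
  set ε' := min (ε/2) ((u i - l i)/2) with hε'def
  have hε' : 0 < ε' := lt_min (by linarith) (by linarith)
  have hε'ε : ε' < ε := lt_of_le_of_lt (min_le_left _ _) (by linarith)
  by_cases hl : f x₀ i ≤ 0 ∧ x₀ i = l i
  · -- lower boundary case
    have hval₀ : Φhat x₀ i = l i := by rw [hΦhat x₀ hx₀ i, if_pos hl]
    -- find δ such that for all close x ∈ B, Φhat x i ≤ l i + ε'
    have key : ∃ δ > 0, ∀ x ∈ B, dist x x₀ < δ → Φhat x i ≤ l i + ε' := by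
      rcases lt_or_eq_of_le hl.1 with hneg | hzero
      · -- f x₀ i < 0
        obtain ⟨δ₁, hδ₁, h₁⟩ := hfεδ (-(f x₀ i)) (by linarith)
        obtain ⟨δ₂, hδ₂, h₂⟩ := hliml i x₀ hx₀ hl.2 hl.1 ε' hε'
        refine ⟨min δ₁ δ₂, lt_min hδ₁ hδ₂, fun x hx hd => ?_⟩
        have hfneg : f x i < 0 := by
          have := h₁ x hx (lt_of_lt_of_le hd (min_le_left _ _))
          rw [abs_lt] at this; linarith
        have hΦb := h₂ x hx (le_of_lt hfneg) (lt_of_lt_of_le hd (min_le_right _ _))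
        rw [hΦhat x hx i]
        split_ifs with h1 h2
        · linarith
        · exact absurd h2.1 (not_le.mpr hfneg)
        · exact max_le (by linarith) (le_trans (min_le_right _ _) hΦb)
      · -- f x₀ i = 0, so Φ x₀ i = x₀ i = l i
        have hΦ₀ : Φ x₀ i = l i := by
          have := (hΦ x₀ hx₀ i).mp hzero
          rw [← this, hl.2]
        obtain ⟨δ₁, hδ₁, h₁⟩ := hΦεδ ε' hε'
        refine ⟨min δ₁ (u i - l i), lt_min hδ₁ (by linarith), fun x hx hd => ?_⟩
        have hΦb : Φ x i ≤ l i + ε' := by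
          have := h₁ x hx (lt_of_lt_of_le hd (min_le_left _ _))
          rw [hΦ₀, abs_lt] at this; linarith
        have hxiu : x i ≠ u i := by
          have := hcoord x
          have hd' : dist x x₀ < u i - l i := lt_of_lt_of_le hd (min_le_right _ _)
          rw [hl.2] at this
          intro hcon; rw [hcon] at this
          have : |u i - l i| < u i - l i := lt_of_le_of_lt this hd'
          rw [abs_of_pos (by linarith)] at this; linarith
        rw [hΦhat x hx i]
        split_ifs with h1 h2
        · linarith
        · exact absurd h2.2 hxiu
        · exact max_le (by linarith) (le_trans (min_le_right _ _) hΦb)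
    obtain ⟨δ, hδ, h⟩ := key
    refine ⟨δ, hδ, fun x hx hd => ?_⟩
    have hmem := hΦhat_mem x hx
    rw [hval₀, Real.dist_eq, abs_of_nonneg (by linarith [hmem.1])]
    have := h x hx hd
    linarith
  · by_cases hu : 0 ≤ f x₀ i ∧ x₀ i = u i
    · -- upper boundary case
      have hval₀ : Φhat x₀ i = u i := by
        rw [hΦhat x₀ hx₀ i, if_neg hl, if_pos hu]
      have key : ∃ δ > 0, ∀ x ∈ B, dist x x₀ < δ → u i - ε' ≤ Φhat x i := by
        rcases lt_or_eq_of_le hu.1 with hpos | hzero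
        · obtain ⟨δ₁, hδ₁, h₁⟩ := hfεδ (f x₀ i) hpos
          obtain ⟨δ₂, hδ₂, h₂⟩ := hlimu i x₀ hx₀ hu.2 hu.1 ε' hε'
          refine ⟨min δ₁ δ₂, lt_min hδ₁ hδ₂, fun x hx hd => ?_⟩
          have hfpos : 0 < f x i := by
            have := h₁ x hx (lt_of_lt_of_le hd (min_le_left _ _))
            rw [abs_lt] at this; linarith
          have hΦb := h₂ x hx (le_of_lt hfpos) (lt_of_lt_of_le hd (min_le_right _ _))
          rw [hΦhat x hx i]
          split_ifs with h1 h2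
          · exact absurd h1.1 (not_le.mpr hfpos)
          · linarith
          · refine le_trans ?_ (le_max_right _ _)
            exact le_min (by linarith) hΦb
        · have hΦ₀ : Φ x₀ i = u i := by
            have := (hΦ x₀ hx₀ i).mp hzero.symm
            rw [← this, hu.2]
          obtain ⟨δ₁, hδ₁, h₁⟩ := hΦεδ ε' hε'
          refine ⟨min δ₁ (u i - l i), lt_min hδ₁ (by linarith), fun x hx hd => ?_⟩
          have hΦb : u i - ε' ≤ Φ x i := by
            have := h₁ x hx (lt_of_lt_of_le hd (min_le_left _ _))
            rw [hΦ₀, abs_lt] at this; linarith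
          have hxil : x i ≠ l i := by
            have := hcoord x
            have hd' : dist x x₀ < u i - l i := lt_of_lt_of_le hd (min_le_right _ _)
            rw [hu.2] at this
            intro hcon; rw [hcon] at this
            have : |l i - u i| < u i - l i := lt_of_le_of_lt this hd'
            rw [abs_of_neg (by linarith)] at this; linarith
          rw [hΦhat x hx i]
          split_ifs with h1 h2
          · exact absurd h1.2 hxil
          · linarith
          · refine le_trans ?_ (le_max_right _ _)
            exact le_min (by linarith) hΦb
      obtain ⟨δ, hδ, h⟩ := key
      refine ⟨δ, hδ, fun x hx hd => ?_⟩
      have hmem := hΦhat_mem x hx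
      rw [hval₀, Real.dist_eq, abs_of_nonpos (by linarith [hmem.2])]
      have := h x hx hd
      linarith
    · -- interior case: neither boundary condition holds at x₀
      have hval₀ : Φhat x₀ i = max (l i) (min (u i) (Φ x₀ i)) := by
        rw [hΦhat x₀ hx₀ i, if_neg hl, if_neg hu]
      -- δa : lower case cannot trigger nearby
      have keyl : ∃ δ > 0, ∀ x ∈ B, dist x x₀ < δ → ¬(f x i ≤ 0 ∧ x i = l i) := by
        rw [not_and_or] at hl
        rcases hl with hfl | hxl
        · push_neg at hfl
          obtain ⟨δ₁, hδ₁, h₁⟩ := hfεδ (f x₀ i) hfl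
          refine ⟨δ₁, hδ₁, fun x hx hd => ?_⟩
          have := h₁ x hx hd
          rw [abs_lt] at this
          rintro ⟨hle, -⟩; linarith
        · have hxl' : l i < x₀ i := lt_of_le_of_ne (hx₀B i).1 (Ne.symm hxl)
          refine ⟨x₀ i - l i, by linarith, fun x hx hd => ?_⟩
          have := hcoord x
          rintro ⟨-, hxi⟩
          rw [hxi] at this
          rw [abs_of_nonpos (by linarith)] at this
          linarith
      have keyu : ∃ δ > 0, ∀ x ∈ B, dist x x₀ < δ → ¬(0 ≤ f x i ∧ x i = u i) := by
        rw [not_and_or] at hu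
        rcases hu with hfu | hxu
        · push_neg at hfu
          obtain ⟨δ₁, hδ₁, h₁⟩ := hfεδ (-(f x₀ i)) (by linarith)
          refine ⟨δ₁, hδ₁, fun x hx hd => ?_⟩
          have := h₁ x hx hd
          rw [abs_lt] at this
          rintro ⟨hle, -⟩; linarith
        · have hxu' : x₀ i < u i := lt_of_le_of_ne (hx₀B i).2 hxu
          refine ⟨u i - x₀ i, by linarith, fun x hx hd => ?_⟩
          have := hcoord x
          rintro ⟨-, hxi⟩
          rw [hxi] at this
          rw [abs_of_nonneg (by linarith)] at this
          linarith
      obtain ⟨δa, hδa, ha⟩ := keyl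
      obtain ⟨δb, hδb, hb⟩ := keyu
      obtain ⟨δc, hδc, hc⟩ := hΦεδ ε hε
      refine ⟨min δa (min δb δc), lt_min hδa (lt_min hδb hδc), fun x hx hd => ?_⟩
      have hda : dist x x₀ < δa := lt_of_lt_of_le hd (min_le_left _ _)
      have hdb : dist x x₀ < δb :=
        lt_of_lt_of_le hd (le_trans (min_le_right _ _) (min_le_left _ _))
      have hdc : dist x x₀ < δc :=
        lt_of_lt_of_le hd (le_trans (min_le_right _ _) (min_le_right _ _))
      have hval : Φhat x i = max (l i) (min (u i) (Φ x i)) := by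
        rw [hΦhat x hx i, if_neg (ha x hx hda), if_neg (hb x hx hdb)]
      rw [hval, hval₀, Real.dist_eq]
      exact lt_of_le_of_lt (clamp_lip _ _ _ _) (hc x hx hdc)
end

section
/- Under the hypotheses of the multi-agent envelope condition (Bellman identity, first-order condition, and differentiability as above), the Euler equation holds: $0 = -c'\big(k_j' - (1-\delta)k_j\big) + \beta \frac{\partial \pi_j}{\partial k_j'}(k_j', k_{-j}') + \beta(1-\delta) c'\big(k_j'' - (1-\delta)k_j'\big) + \beta^2 \frac{\partial k_{-j}''}{\partial k_j'} \cdot \frac{\partial V_j}{\partial k_{-j}''}(k_j'', k_{-j}'')$, where $k'' = (k_j''(k'), k_{-j}''(k'))$ denotes the policy applied to next-period state $k'$. -/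
/-- Partial derivative with respect to the first coordinate. -/
noncomputable def pd1 (F : ℝ × ℝ → ℝ) (p : ℝ × ℝ) : ℝ :=
  deriv (fun t => F (t, p.2)) p.1

/-- Partial derivative with respect to the second coordinate. -/
noncomputable def pd2 (F : ℝ × ℝ → ℝ) (p : ℝ × ℝ) : ℝ :=
  deriv (fun t => F (p.1, t)) p.2

private lemma pd1_eq (F : ℝ × ℝ → ℝ) (hF : Differentiable ℝ F) (p : ℝ × ℝ) :
    pd1 F p = fderiv ℝ F p (1, 0) := by
  have h1 : HasDerivAt (fun t : ℝ => (t, p.2)) ((1 : ℝ), (0 : ℝ)) p.1 :=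
    (hasDerivAt_id p.1).prodMk (hasDerivAt_const _ _)
  have h2 : HasDerivAt (fun t : ℝ => F (t, p.2)) (fderiv ℝ F (p.1, p.2) (1, 0)) p.1 :=
    (hF (p.1, p.2)).hasFDerivAt.comp_hasDerivAt p.1 h1
  simpa [pd1] using h2.deriv

private lemma pd2_eq (F : ℝ × ℝ → ℝ) (hF : Differentiable ℝ F) (p : ℝ × ℝ) :
    pd2 F p = fderiv ℝ F p (0, 1) := by
  have h1 : HasDerivAt (fun t : ℝ => (p.1, t)) ((0 : ℝ), (1 : ℝ)) p.2 :=
    (hasDerivAt_const _ _).prodMk (hasDerivAt_id p.2)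
  have h2 : HasDerivAt (fun t : ℝ => F (p.1, t)) (fderiv ℝ F (p.1, p.2) (0, 1)) p.2 :=
    (hF (p.1, p.2)).hasFDerivAt.comp_hasDerivAt p.2 h1
  simpa [pd2] using h2.deriv

private lemma chain2 (F : ℝ × ℝ → ℝ) (hF : Differentiable ℝ F) {f g : ℝ → ℝ}
    {f' g' x : ℝ} (hf : HasDerivAt f f' x) (hg : HasDerivAt g g' x) :
    HasDerivAt (fun t => F (f t, g t))
      (f' * pd1 F (f x, g x) + g' * pd2 F (f x, g x)) x := by
  have hfg : HasDerivAt (fun t => (f t, g t)) (f', g') x := hf.prodMk hg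
  have h2 : HasDerivAt (fun t => F (f t, g t)) (fderiv ℝ F (f x, g x) (f', g')) x :=
    (hF (f x, g x)).hasFDerivAt.comp_hasDerivAt x hfg
  have hv : (f', g') = f' • ((1 : ℝ), (0 : ℝ)) + g' • ((0 : ℝ), (1 : ℝ)) := by
    simp [Prod.ext_iff]
  rw [pd1_eq F hF, pd2_eq F hF]
  have : fderiv ℝ F (f x, g x) (f', g')
      = f' * fderiv ℝ F (f x, g x) (1, 0) + g' * fderiv ℝ F (f x, g x) (0, 1) := by
    rw [hv, map_add, map_smul, map_smul]; simp [smul_eq_mul]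
  rwa [← this]

/-- Euler equation in the multi-agent dynamic investment game. -/
theorem stmt10 (β δ : ℝ) (V π : ℝ × ℝ → ℝ) (c : ℝ → ℝ) (kj' km' : ℝ × ℝ → ℝ)
    (hV : Differentiable ℝ V) (hπ : Differentiable ℝ π)
    (hc : Differentiable ℝ c)
    (hkj : Differentiable ℝ kj') (hkm : Differentiable ℝ km')
    (hBell : ∀ p : ℝ × ℝ,
      V p = π p - c (kj' p - (1 - δ) * p.1) + β * V (kj' p, km' p))
    (hFOC : ∀ p : ℝ × ℝ,
      -deriv c (kj' p - (1 - δ) * p.1) + β * pd1 V (kj' p, km' p) = 0) :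
    ∀ p : ℝ × ℝ,
      0 = -deriv c (kj' p - (1 - δ) * p.1)
        + β * pd1 π (kj' p, km' p)
        + β * (1 - δ) * deriv c (kj' (kj' p, km' p) - (1 - δ) * kj' p)
        + β ^ 2 * pd1 km' (kj' p, km' p)
          * pd2 V (kj' (kj' p, km' p), km' (kj' p, km' p)) := by
  -- Envelope condition
  have henv : ∀ q : ℝ × ℝ, pd1 V q = pd1 π q
      + (1 - δ) * deriv c (kj' q - (1 - δ) * q.1)
      + β * pd1 km' q * pd2 V (kj' q, km' q) := by
    intro q
    obtain ⟨x1, x2⟩ := q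
    set K := pd1 kj' (x1, x2) with hK
    set M := pd1 km' (x1, x2) with hM
    -- derivative of the RHS of Bellman in the first coordinate
    have hkjd : HasDerivAt (fun t => kj' (t, x2)) K x1 := by
      have := chain2 kj' hkj (hasDerivAt_id x1) (hasDerivAt_const x1 x2)
      simpa [pd2] using this
    have hkmd : HasDerivAt (fun t => km' (t, x2)) M x1 := by
      have := chain2 km' hkm (hasDerivAt_id x1) (hasDerivAt_const x1 x2)
      simpa [pd2] using this
    have hπd : HasDerivAt (fun t => π (t, x2)) (pd1 π (x1, x2)) x1 := by
      have := chain2 π hπ (hasDerivAt_id x1) (hasDerivAt_const x1 x2)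
      simpa [pd2] using this
    have hinner : HasDerivAt (fun t => kj' (t, x2) - (1 - δ) * t)
        (K - (1 - δ)) x1 := by
      exact (hkjd.sub ((hasDerivAt_id' x1).const_mul (1 - δ))).congr_deriv (by ring)
    have hcd : HasDerivAt (fun t => c (kj' (t, x2) - (1 - δ) * t))
        (deriv c (kj' (x1, x2) - (1 - δ) * x1) * (K - (1 - δ))) x1 := by
      exact (hc.differentiableAt.hasDerivAt.comp x1 hinner)
    have hVd : HasDerivAt (fun t => V (kj' (t, x2), km' (t, x2)))
        (K * pd1 V (kj' (x1, x2), km' (x1, x2))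
          + M * pd2 V (kj' (x1, x2), km' (x1, x2))) x1 :=
      chain2 V hV hkjd hkmd
    have hlhs : HasDerivAt (fun t => V (t, x2))
        (pd1 π (x1, x2) - deriv c (kj' (x1, x2) - (1 - δ) * x1) * (K - (1 - δ))
          + β * (K * pd1 V (kj' (x1, x2), km' (x1, x2))
            + M * pd2 V (kj' (x1, x2), km' (x1, x2)))) x1 := by
      have hfun : (fun t : ℝ => V (t, x2))
          = fun t => π (t, x2) - c (kj' (t, x2) - (1 - δ) * t)
              + β * V (kj' (t, x2), km' (t, x2)) := by
        funext t; simpa using hBell (t, x2)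
      rw [hfun]
      exact (hπd.sub hcd).add (hVd.const_mul β)
    have hpd1V : pd1 V (x1, x2)
        = pd1 π (x1, x2) - deriv c (kj' (x1, x2) - (1 - δ) * x1) * (K - (1 - δ))
          + β * (K * pd1 V (kj' (x1, x2), km' (x1, x2))
            + M * pd2 V (kj' (x1, x2), km' (x1, x2))) := by
      simpa [pd1] using hlhs.deriv
    have hfoc := hFOC (x1, x2)
    -- β * pd1 V (k'') = c'
    have hc' : β * pd1 V (kj' (x1, x2), km' (x1, x2))
        = deriv c (kj' (x1, x2) - (1 - δ) * x1) := by linarith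
    rw [hpd1V]
    simp only
    linear_combination K * hc'
  intro p
  have hfoc := hFOC p
  have := henv (kj' p, km' p)
  simp only at this
  rw [this] at hfoc
  linarith [hfoc]
end
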